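/- Let G be a group, Q a finite set with |Q| ≥ 2, and {X_n} an exhaustive sequence for G. The Besicovitch pseudodistance d_B on Q^G is a metric (i.e., d_B(c_1,c_2) > 0 whenever c_1 ≠ c_2) if and only if G is finite. -/

import Mathlib

open Filter

noncomputable def hamDist {G Q : Type*} (U : Set G) (c₁ c₂ : G → Q) : ℕ :=
  {x ∈ U | c₁ x ≠ c₂ x}.ncard

noncomputable def besDist {G Q : Type*} (X : ℕ → Finset G) (c₁ c₂ : G → Q) : ℝ :=
  limsup (fun n => (hamDist (X n : Set G) c₁ c₂ : ℝ) / (X n).card) atTop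

def IsExhaustive {G : Type*} (X : ℕ → Finset G) : Prop :=
  (∀ n, X n ⊆ X (n + 1)) ∧ ∀ g : G, ∃ n, g ∈ X n

theorem besicovitch_dist_iff_finite {G Q : Type*} [Group G] [Fintype Q]
    (hQ : 2 ≤ Fintype.card Q) (X : ℕ → Finset G) (hX : IsExhaustive X) :
    (∀ c₁ c₂ : G → Q, c₁ ≠ c₂ → 0 < besDist X c₁ c₂) ↔ Finite G := by
  have hmono : Monotone X := monotone_nat_of_le_succ (fun n => hX.1 n)
  constructor
  · intro H
    by_contra hfin
    have : Infinite G := not_finite_iff_infinite.mp hfin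
    -- get two distinct elements of Q
    have : Nontrivial Q := Fintype.one_lt_card_iff_nontrivial.mp hQ
    obtain ⟨a, b, hab⟩ := exists_pair_ne Q
    classical
    set c₁ : G → Q := fun _ => a with hc₁
    set c₂ : G → Q := fun x => if x = 1 then b else a with hc₂
    have hne : c₁ ≠ c₂ := by
      intro h
      have := congrFun h 1
      simp [hc₁, hc₂] at this
      exact hab this
    -- card X n tends to atTop
    have hcard : Tendsto (fun n => (X n).card) atTop atTop := by
      apply tendsto_atTop_atTop_of_monotone (fun m n hmn => Finset.card_le_card (hmono hmn))
      intro m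
      obtain ⟨s, hs⟩ := Infinite.exists_subset_card_eq G m
      classical
      set f : G → ℕ := fun g => (hX.2 g).choose with hf
      refine ⟨s.sup f, ?_⟩
      have hsub : s ⊆ X (s.sup f) := by
        intro g hg
        exact hmono (Finset.le_sup hg) (hX.2 g).choose_spec
      calc m = s.card := hs.symm
        _ ≤ (X (s.sup f)).card := Finset.card_le_card hsub
    have hcardR : Tendsto (fun n => ((X n).card : ℝ)) atTop atTop :=
      tendsto_natCast_atTop_atTop.comp hcard
    have hham : ∀ n, (hamDist (X n : Set G) c₁ c₂ : ℝ) ≤ 1 := by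
      intro n
      have hsub : {x ∈ (X n : Set G) | c₁ x ≠ c₂ x} ⊆ {(1 : G)} := by
        intro x hx
        by_contra hx1
        simp only [Set.mem_singleton_iff] at hx1
        apply hx.2
        simp [hc₁, hc₂, hx1]
      have : hamDist (X n : Set G) c₁ c₂ ≤ 1 := by
        have := Set.ncard_le_ncard hsub (Set.finite_singleton 1)
        rw [Set.ncard_singleton] at this
        exact this
      exact_mod_cast this
    have hten : Tendsto (fun n => (hamDist (X n : Set G) c₁ c₂ : ℝ) / (X n).card)
        atTop (nhds 0) := by
      have h1 : Tendsto (fun n => 1 / ((X n).card : ℝ)) atTop (nhds 0) := by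
        simpa [Pi.inv_def] using hcardR.inv_tendsto_atTop
      refine tendsto_of_tendsto_of_tendsto_of_le_of_le tendsto_const_nhds h1
        (fun n => by positivity) (fun n => ?_)
      rcases Nat.eq_zero_or_pos (X n).card with h0 | h0
      · simp [h0]
      · have hd : (0 : ℝ) < (X n).card := by exact_mod_cast h0
        gcongr
        exact hham n
    have hz : besDist X c₁ c₂ = 0 := hten.limsup_eq
    have := H c₁ c₂ hne
    rw [hz] at this
    exact lt_irrefl 0 this
  · intro hfin
    intro c₁ c₂ hne
    have := Fintype.ofFinite G
    obtain ⟨N, hN⟩ : ∃ N, ∀ n, N ≤ n → X n = Finset.univ := by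
      classical
      set f : G → ℕ := fun g => (hX.2 g).choose with hf
      refine ⟨Finset.univ.sup f, fun n hn => ?_⟩
      apply Finset.eq_univ_of_forall
      intro g
      exact hmono (le_trans (Finset.le_sup (Finset.mem_univ g)) hn) (hX.2 g).choose_spec
    set h : ℕ := {x : G | c₁ x ≠ c₂ x}.ncard with hh
    have hpos : 0 < h := by
      rw [hh]
      rw [Set.ncard_pos (Set.toFinite _)]
      obtain ⟨x, hx⟩ := Function.ne_iff.mp hne
      exact ⟨x, hx⟩
    have hcardG : 0 < Fintype.card G := Fintype.card_pos
    have hev : ∀ᶠ n in atTop, (hamDist (X n : Set G) c₁ c₂ : ℝ) / (X n).card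
        = (h : ℝ) / Fintype.card G := by
      filter_upwards [eventually_ge_atTop N] with n hn
      rw [hN n hn]
      have heq : hamDist ((Finset.univ : Finset G) : Set G) c₁ c₂ = h := by
        unfold hamDist
        congr 1
        simp
      rw [heq, Finset.card_univ]
    have hten : Tendsto (fun n => (hamDist (X n : Set G) c₁ c₂ : ℝ) / (X n).card)
        atTop (nhds ((h : ℝ) / Fintype.card G)) :=
      Tendsto.congr' (Filter.EventuallyEq.symm hev) tendsto_const_nhds
    have hz : besDist X c₁ c₂ = (h : ℝ) / Fintype.card G := hten.limsup_eq
    rw [hz]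
    positivity
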